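/- Let M ⊆ ℍ^d be a totally geodesic submanifold. Under the geodesic projection π^G_M, every tangent vector v at a point x ∈ ℍ^d gets at least cosh(d_ℍ(x,M)) times shorter: ‖dπ^G_M(v)‖_ℍ ≤ ‖v‖_ℍ / cosh(d_ℍ(x,M)). -/

import Mathlib

noncomputable section

open Set

/-- Ambient Euclidean space `ℝ^d`. -/
abbrev E (d : ℕ) : Type := EuclideanSpace ℝ (Fin d)

/-- The open unit (Poincaré) ball `ℍ^d`. -/
def pball (d : ℕ) : Set (E d) := {x | ‖x‖ < 1}

/-- Inverse hyperbolic cosine. -/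
def arcosh (t : ℝ) : ℝ := Real.log (t + Real.sqrt (t ^ 2 - 1))

/-- Hyperbolic distance in the Poincaré ball model. -/
def dH {d : ℕ} (x y : E d) : ℝ :=
  arcosh (1 + 2 * ‖x - y‖ ^ 2 / ((1 - ‖x‖ ^ 2) * (1 - ‖y‖ ^ 2)))

/-- A unit-speed parameterized complete geodesic of the Poincaré ball. -/
def IsUnitSpeedGeodesic {d : ℕ} (γ : ℝ → E d) : Prop :=
  (∀ t, γ t ∈ pball d) ∧ ∀ s t : ℝ, dH (γ s) (γ t) = |s - t|

/-- A subset of the ball which is a complete geodesic line. -/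
def IsGeodesicLine {d : ℕ} (c : Set (E d)) : Prop :=
  ∃ γ : ℝ → E d, IsUnitSpeedGeodesic γ ∧ c = Set.range γ

/-- Totally geodesic subset of the Poincaré ball: it contains every complete geodesic
through any two of its points. -/
def TotGeodesic {d : ℕ} (M : Set (E d)) : Prop :=
  M ⊆ pball d ∧
    ∀ x ∈ M, ∀ y ∈ M, x ≠ y →
      ∀ c : Set (E d), IsGeodesicLine c → x ∈ c → y ∈ c → c ⊆ M

/-- Geodesic hull of a set `S` of points of the ball and/or ideal boundary points:
the smallest totally geodesic subset containing the ball-points of `S` and whose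
closure contains all of `S` (in particular the ideal points of `S`). -/
def GH {d : ℕ} (S : Set (E d)) : Set (E d) :=
  ⋂₀ {M : Set (E d) | TotGeodesic M ∧ S ∩ pball d ⊆ M ∧ S ⊆ closure M}

/-- Busemann function of the ideal point `p`. -/
def busemann {d : ℕ} (p x : E d) : ℝ := Real.log (‖p - x‖ ^ 2 / (1 - ‖x‖ ^ 2))

/-- Horosphere centered at the ideal point `p` passing through `x`. -/
def horosphere {d : ℕ} (p x : E d) : Set (E d) :=
  {y ∈ pball d | busemann p y = busemann p x}

/-- `S(x)`: intersection of the horospheres through `x` centered at the ideal points `p i`. -/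
def horoInter {d K : ℕ} (p : Fin K → E d) (x : E d) : Set (E d) :=
  ⋂ i, horosphere (p i) x

/-- Isometry of hyperbolic space (Poincaré ball model). -/
def IsHypIsometry {d : ℕ} (φ : E d → E d) : Prop :=
  Set.BijOn φ (pball d) (pball d) ∧
    ∀ x ∈ pball d, ∀ y ∈ pball d, dH (φ x) (φ y) = dH x y

/-- A rotation around `P`: an isometry of `ℍ^d` fixing every point of `P`. -/
def IsRotationAround {d : ℕ} (P : Set (E d)) (φ : E d → E d) : Prop :=
  IsHypIsometry φ ∧ ∀ q ∈ P, φ q = q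

/-- `m` is a nearest point of `M` to `x`. -/
def IsNearestPt {d : ℕ} (M : Set (E d)) (x m : E d) : Prop :=
  m ∈ M ∧ ∀ y ∈ M, dH x m ≤ dH x y

/-- `π` is the geodesic (closest-point) projection onto `M`. -/
def IsGeodProj {d : ℕ} (M : Set (E d)) (π : E d → E d) : Prop :=
  ∀ x ∈ pball d, IsNearestPt M x (π x)

/-- `π` is the horospherical projection determined by the base point `b` and the
ideal points `p 0, …, p (K-1)`: it sends `x` to the point of
`GH(b,p₁,…,p_K) ∩ S(x)` strictly closer to `b` (and fixes the spine pointwise). -/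
def IsHoroProj {d K : ℕ} (b : E d) (p : Fin K → E d) (π : E d → E d) : Prop :=
  ∀ x ∈ pball d,
    π x ∈ GH (insert b (Set.range p)) ∩ horoInter p x ∧
    (∀ z ∈ GH (insert b (Set.range p)) ∩ horoInter p x, z ≠ π x → dH b (π x) < dH b z) ∧
    (x ∈ GH (Set.range p) → π x = x)

/-- Tangent directions at `c` of unit-speed geodesics contained in `M`. -/
def tangentDirs {d : ℕ} (M : Set (E d)) (c : E d) : Set (E d) :=
  {v | ∃ γ : ℝ → E d, IsUnitSpeedGeodesic γ ∧ Set.range γ ⊆ M ∧ γ 0 = c ∧ HasDerivAt γ v 0}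

/-- `x` and `y` lie on the same side of `L` inside the ball. -/
def SameSide {d : ℕ} (L : Set (E d)) (x y : E d) : Prop :=
  ∃ C : Set (E d), IsConnected C ∧ C ⊆ pball d \ L ∧ x ∈ C ∧ y ∈ C

/-- The (closed) half of `M` bounded by `P` that contains `b`. -/
def halfOf {d : ℕ} (M P : Set (E d)) (b : E d) : Set (E d) :=
  P ∪ connectedComponentIn (M \ P) b

/-- Hyperbolic length of a path `γ` with derivative `γ'` over `[a, b]`. -/
def hypLen {d : ℕ} (γ γ' : ℝ → E d) (a b : ℝ) : ℝ :=
  ∫ t in a..b, 2 * ‖γ' t‖ / (1 - ‖γ t‖ ^ 2)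

/-- `N ⊆ ℝ^d` is a `k`-dimensional topological submanifold (without boundary). -/
def IsTopSubmanifoldOfDim {d : ℕ} (k : ℕ) (N : Set (E d)) : Prop :=
  ∀ y ∈ N, ∃ U : Set (E d), IsOpen U ∧ y ∈ U ∧
    ∃ V : Set (EuclideanSpace ℝ (Fin k)), IsOpen V ∧ Nonempty (↥(U ∩ N) ≃ₜ ↥V)

/-- The model (closed) half-space of `ℝ^k`. -/
def modelHalfSpace (k : ℕ) : Set (EuclideanSpace ℝ (Fin k)) :=
  {v | ∀ i : Fin k, (i : ℕ) = 0 → 0 ≤ v i}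

/-- `N ⊆ ℝ^d` is a `k`-dimensional topological submanifold with boundary. -/
def IsTopSubmanifoldWithBdryOfDim {d : ℕ} (k : ℕ) (N : Set (E d)) : Prop :=
  ∀ y ∈ N, ∃ U : Set (E d), IsOpen U ∧ y ∈ U ∧
    ∃ V : Set (EuclideanSpace ℝ (Fin k)),
      (∃ W : Set (EuclideanSpace ℝ (Fin k)), IsOpen W ∧ V = W ∩ modelHalfSpace k) ∧
      Nonempty (↥(U ∩ N) ≃ₜ ↥V)

/-- Geodesically convex subset of the ball. -/
def GeodConvex {d : ℕ} (N : Set (E d)) : Prop :=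
  N ⊆ pball d ∧
    ∀ x ∈ N, ∀ y ∈ N, ∀ γ : ℝ → E d, IsUnitSpeedGeodesic γ →
      ∀ s t : ℝ, γ s = x → γ t = y → ∀ u ∈ Set.uIcc s t, γ u ∈ N


set_option maxHeartbeats 1000000

section Helpers
variable {d : ℕ}


def Bf {d : ℕ} (z w : ℝ × E d) : ℝ := z.1 * w.1 - inner ℝ z.2 w.2

def Lf {d : ℕ} (x : E d) : ℝ × E d :=
  ((1 + ‖x‖ ^ 2) / (1 - ‖x‖ ^ 2), (2 / (1 - ‖x‖ ^ 2)) • x)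

def Qf {d : ℕ} (x y : E d) : ℝ := 1 + 2 * ‖x - y‖ ^ 2 / ((1 - ‖x‖ ^ 2) * (1 - ‖y‖ ^ 2))

lemma dH_eq (x y : E d) : dH x y = arcosh (Qf x y) := rfl

lemma ball_pos {x : E d} (hx : x ∈ pball d) : 0 < 1 - ‖x‖ ^ 2 := by
  have : ‖x‖ < 1 := hx
  nlinarith [norm_nonneg x]

lemma one_le_Qf {x y : E d} (hx : x ∈ pball d) (hy : y ∈ pball d) : 1 ≤ Qf x y := by
  have h1 := ball_pos hx
  have h2 := ball_pos hy
  have : 0 ≤ 2 * ‖x - y‖ ^ 2 / ((1 - ‖x‖ ^ 2) * (1 - ‖y‖ ^ 2)) := by positivity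
  simp only [Qf]; linarith

lemma Qf_self (x : E d) : Qf x x = 1 := by simp [Qf]

lemma Qf_comm (x y : E d) : Qf x y = Qf y x := by
  simp [Qf, norm_sub_rev, mul_comm]

lemma Qf_eq_B {x y : E d} (hx : x ∈ pball d) (hy : y ∈ pball d) :
    Qf x y = Bf (Lf x) (Lf y) := by
  have h1 := ball_pos hx
  have h2 := ball_pos hy
  have hns : ‖x - y‖ ^ 2 = ‖x‖ ^ 2 - 2 * inner ℝ x y + ‖y‖ ^ 2 := by
    rw [@norm_sub_sq_real (E d)]
  simp only [Qf, Bf, Lf, real_inner_smul_left, real_inner_smul_right]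
  rw [hns]
  field_simp
  ring

lemma Bf_self_L {x : E d} (hx : x ∈ pball d) : Bf (Lf x) (Lf x) = 1 := by
  rw [← Qf_eq_B hx hx, Qf_self]

lemma Qf_gt_one {x y : E d} (hx : x ∈ pball d) (hy : y ∈ pball d) (hne : x ≠ y) :
    1 < Qf x y := by
  have h1 := ball_pos hx
  have h2 := ball_pos hy
  have hns : 0 < ‖x - y‖ ^ 2 := by
    have := norm_sub_pos_iff.2 hne
    positivity
  have : 0 < 2 * ‖x - y‖ ^ 2 / ((1 - ‖x‖ ^ 2) * (1 - ‖y‖ ^ 2)) := by positivity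
  simp only [Qf]; linarith

-- arcosh lemmas
lemma sqrt_pos_arg {t : ℝ} (ht : 1 ≤ t) : 0 < t + Real.sqrt (t ^ 2 - 1) := by
  have := Real.sqrt_nonneg (t ^ 2 - 1); linarith

lemma arcosh_nonneg {t : ℝ} (ht : 1 ≤ t) : 0 ≤ arcosh t := by
  have := Real.sqrt_nonneg (t ^ 2 - 1)
  exact Real.log_nonneg (by linarith)

lemma cosh_arcosh {t : ℝ} (ht : 1 ≤ t) : Real.cosh (arcosh t) = t := by
  have h0 : (0:ℝ) ≤ t ^ 2 - 1 := by nlinarith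
  have hs : Real.sqrt (t ^ 2 - 1) ^ 2 = t ^ 2 - 1 := Real.sq_sqrt h0
  have hpos := sqrt_pos_arg ht
  have hmul : (t + Real.sqrt (t ^ 2 - 1)) * (t - Real.sqrt (t ^ 2 - 1)) = 1 := by
    nlinarith [hs]
  have hinv : (t + Real.sqrt (t ^ 2 - 1))⁻¹ = t - Real.sqrt (t ^ 2 - 1) :=
    inv_eq_of_mul_eq_one_right hmul
  rw [arcosh, Real.cosh_eq, Real.exp_log hpos, Real.exp_neg, Real.exp_log hpos, hinv]
  ring

lemma arcosh_cosh (u : ℝ) : arcosh (Real.cosh u) = |u| := by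
  have h1 : Real.cosh u ^ 2 - 1 = Real.sinh u ^ 2 := by
    have := Real.cosh_sq_sub_sinh_sq u; nlinarith
  rw [arcosh, h1, Real.sqrt_sq_eq_abs]
  have : Real.cosh u + |Real.sinh u| = Real.exp |u| := by
    rcases le_total 0 u with h | h
    · rw [abs_of_nonneg (Real.sinh_nonneg_iff.2 h), abs_of_nonneg h, Real.cosh_add_sinh]
    · rw [abs_of_nonpos (Real.sinh_nonpos_iff.2 h), abs_of_nonpos h, ← Real.cosh_sub_sinh]; ring
  rw [this, Real.log_exp]

lemma le_of_arcosh_le {a b : ℝ} (ha : 1 ≤ a) (hb : 1 ≤ b) (h : arcosh a ≤ arcosh b) :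
    a ≤ b := by
  calc a = Real.cosh (arcosh a) := (cosh_arcosh ha).symm
    _ ≤ Real.cosh (arcosh b) := by
        rw [Real.cosh_le_cosh, abs_of_nonneg (arcosh_nonneg ha),
          abs_of_nonneg (arcosh_nonneg hb)]
        exact h
    _ = b := cosh_arcosh hb

lemma sinh_arcosh {t : ℝ} (ht : 1 ≤ t) : Real.sinh (arcosh t) = Real.sqrt (t ^ 2 - 1) := by
  have h0 : (0:ℝ) ≤ t ^ 2 - 1 := by nlinarith
  have h1 : Real.sinh (arcosh t) ^ 2 = t ^ 2 - 1 := by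
    have := Real.cosh_sq_sub_sinh_sq (arcosh t)
    rw [cosh_arcosh ht] at this; nlinarith
  have h2 : 0 ≤ Real.sinh (arcosh t) := Real.sinh_nonneg_iff.2 (arcosh_nonneg ht)
  rw [← h1, Real.sqrt_sq h2]


def invL {d : ℕ} (z : ℝ × E d) : E d := (1 + z.1)⁻¹ • z.2

lemma Bf_comm (z w : ℝ × E d) : Bf z w = Bf w z := by
  simp [Bf, real_inner_comm, mul_comm]

lemma Bf_combo (a b a' b' : ℝ) (P V : ℝ × E d) :
    Bf (a • P + b • V) (a' • P + b' • V) =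
      a * a' * Bf P P + a * b' * Bf P V + b * a' * Bf V P + b * b' * Bf V V := by
  simp only [Bf, Prod.fst_add, Prod.snd_add, Prod.smul_fst, Prod.smul_snd, smul_eq_mul,
    inner_add_left, inner_add_right, real_inner_smul_left, real_inner_smul_right]
  ring

lemma sq_fst_of_Bf_one {d : ℕ} {z : ℝ × E d} (hz : Bf z z = 1) : z.1 ^ 2 = 1 + ‖z.2‖ ^ 2 := by
  have h : (inner ℝ z.2 z.2 : ℝ) = ‖z.2‖ ^ 2 := real_inner_self_eq_norm_sq z.2
  simp only [Bf] at hz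
  nlinarith [hz]

lemma invL_Lf {d : ℕ} {x : E d} (hx : x ∈ pball d) : invL (Lf x) = x := by
  have h := ball_pos hx
  simp only [invL, Lf, smul_smul]
  have h2 : (0:ℝ) < 2 / (1 - ‖x‖ ^ 2) := by positivity
  have hs : (1 + (1 + ‖x‖ ^ 2) / (1 - ‖x‖ ^ 2)) = 2 / (1 - ‖x‖ ^ 2) := by
    field_simp; ring
  rw [hs, inv_mul_cancel₀ (ne_of_gt h2), one_smul]

lemma Lf_invL {d : ℕ} {z : ℝ × E d} (hz : Bf z z = 1) (h1 : 0 < z.1) :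
    invL z ∈ pball d ∧ Lf (invL z) = z := by
  have hsq := sq_fst_of_Bf_one hz
  have hge : 1 ≤ z.1 := by nlinarith [norm_nonneg z.2]
  have hne : z.1 + 1 ≠ 0 := by linarith
  have hn : ‖invL z‖ ^ 2 = (z.1 - 1) / (z.1 + 1) := by
    rw [invL, norm_smul, mul_pow, Real.norm_eq_abs, sq_abs]
    have : ‖z.2‖ ^ 2 = z.1 ^ 2 - 1 := by linarith
    rw [this]
    field_simp
    ring
  have hmem : invL z ∈ pball d := by
    have h2 : ‖invL z‖ ^ 2 < 1 := by
      rw [hn, div_lt_one (by linarith)]; linarith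
    show ‖invL z‖ < 1
    nlinarith [norm_nonneg (invL z)]
  have hden : 1 - ‖invL z‖ ^ 2 = 2 / (z.1 + 1) := by
    rw [hn]; field_simp; ring
  refine ⟨hmem, Prod.ext ?_ ?_⟩
  · show (1 + ‖invL z‖ ^ 2) / (1 - ‖invL z‖ ^ 2) = z.1
    rw [hden, hn]
    rw [div_eq_iff (by positivity)]
    field_simp
    ring
  · show (2 / (1 - ‖invL z‖ ^ 2)) • invL z = z.2
    rw [hden, invL, smul_smul]
    have : 2 / (2 / (z.1 + 1)) * (1 + z.1)⁻¹ = 1 := by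
      field_simp; ring
    rw [this, one_smul]

lemma line_through {d : ℕ} {p q : E d} (hp : p ∈ pball d) (hq : q ∈ pball d) (hne : p ≠ q) :
    ∃ γ : ℝ → E d, ∃ V : ℝ × E d,
      IsUnitSpeedGeodesic γ ∧ γ 0 = p ∧ γ (arcosh (Qf p q)) = q ∧
      (∀ t, Lf (γ t) = Real.cosh t • Lf p + Real.sinh t • V) ∧
      Bf (Lf p) V = 0 ∧ Bf V V = -1 := by
  set c := Qf p q with hc_def
  have hc : 1 < c := Qf_gt_one hp hq hne
  set s0 := Real.sqrt (c ^ 2 - 1) with hs0_def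
  have hs0sq : s0 ^ 2 = c ^ 2 - 1 := Real.sq_sqrt (by nlinarith)
  have hs0 : 0 < s0 := Real.sqrt_pos.2 (by nlinarith)
  set P := Lf p with hP_def
  set Qv := Lf q with hQv_def
  have hBPP : Bf P P = 1 := Bf_self_L hp
  have hBQQ : Bf Qv Qv = 1 := Bf_self_L hq
  have hBPQ : Bf P Qv = c := (Qf_eq_B hp hq).symm
  have hBQP : Bf Qv P = c := by rw [Bf_comm]; exact hBPQ
  set V : ℝ × E d := s0⁻¹ • (Qv - c • P) with hV_def
  -- rewrite V as combination to use Bf_combo : V = (-(s0⁻¹*c)) • P + s0⁻¹ • Qv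
  have hVco : V = (-(s0⁻¹ * c)) • P + s0⁻¹ • Qv := by
    rw [hV_def, smul_sub, smul_smul]; module
  have hBPV : Bf P V = 0 := by
    have := Bf_combo 1 0 (-(s0⁻¹ * c)) s0⁻¹ P Qv
    simp only [one_smul, zero_smul, add_zero] at this
    rw [hVco, this, hBPP, hBPQ]
    ring
  have hBVP : Bf V P = 0 := by rw [Bf_comm]; exact hBPV
  have hBVV : Bf V V = -1 := by
    have := Bf_combo (-(s0⁻¹ * c)) s0⁻¹ (-(s0⁻¹ * c)) s0⁻¹ P Qv
    rw [← hVco] at this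
    rw [this, hBPP, hBPQ, hBQP, hBQQ]
    field_simp
    nlinarith [hs0sq]
  set Z : ℝ → ℝ × E d := fun t => Real.cosh t • P + Real.sinh t • V with hZ_def
  have hBZZ : ∀ s t, Bf (Z s) (Z t) = Real.cosh (s - t) := by
    intro s t
    rw [hZ_def]
    simp only
    rw [Bf_combo, hBPP, hBPV, hBVP, hBVV, Real.cosh_sub]
    ring
  have hZone : ∀ t, Bf (Z t) (Z t) = 1 := by
    intro t; rw [hBZZ, sub_self, Real.cosh_zero]
  have hZsq : ∀ t, (Z t).1 ^ 2 = 1 + ‖(Z t).2‖ ^ 2 := fun t => sq_fst_of_Bf_one (hZone t)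
  have hZcont : Continuous fun t => (Z t).1 := by
    have : (fun t => (Z t).1) = fun t => Real.cosh t * P.1 + Real.sinh t * V.1 := by
      funext t; simp [hZ_def]
    rw [this]
    exact (Real.continuous_cosh.mul continuous_const).add
      (Real.continuous_sinh.mul continuous_const)
  have hZ0 : Z 0 = P := by simp [hZ_def]
  have hP1 : 0 < P.1 := by
    have h := ball_pos hp
    have : P.1 = (1 + ‖p‖ ^ 2) / (1 - ‖p‖ ^ 2) := rfl
    rw [this]; positivity
  have hZpos : ∀ t, 0 < (Z t).1 := by
    intro t
    by_contra hcon
    push_neg at hcon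
    have h0 : (0:ℝ) ∈ Set.uIcc ((Z t).1) ((Z 0).1) := by
      rw [hZ0]
      exact Set.mem_uIcc.2 (Or.inl ⟨hcon, le_of_lt hP1⟩)
    obtain ⟨s, _, hs⟩ := intermediate_value_uIcc (hZcont.continuousOn) h0
    have hs' : (Z s).1 = 0 := hs
    have := hZsq s
    rw [hs'] at this
    nlinarith [norm_nonneg ((Z s).2)]
  have hball := fun t => Lf_invL (hZone t) (hZpos t)
  refine ⟨fun t => invL (Z t), V, ⟨fun t => (hball t).1, ?_⟩, ?_, ?_, fun t => (hball t).2, hBPV, hBVV⟩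
  · intro s t
    rw [dH_eq, Qf_eq_B (hball s).1 (hball t).1, (hball s).2, (hball t).2, hBZZ, arcosh_cosh]
  · show invL (Z 0) = p
    rw [hZ0, hP_def, invL_Lf hp]
  · have hcosh : Real.cosh (arcosh c) = c := cosh_arcosh (le_of_lt hc)
    have hsinh : Real.sinh (arcosh c) = s0 := sinh_arcosh (le_of_lt hc)
    have : Z (arcosh c) = Qv := by
      rw [hZ_def]
      simp only
      rw [hcosh, hsinh, hV_def, smul_smul, mul_inv_cancel₀ (ne_of_gt hs0), one_smul]
      module
    show invL (Z (arcosh (Qf p q))) = q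
    rw [← hc_def, this, hQv_def, invL_Lf hq]

lemma Bf_smul_left {d : ℕ} (a : ℝ) (z w : ℝ × E d) : Bf (a • z) w = a * Bf z w := by
  simp only [Bf, Prod.smul_fst, Prod.smul_snd, smul_eq_mul, real_inner_smul_left]; ring

lemma Bf_smul_right {d : ℕ} (a : ℝ) (z w : ℝ × E d) : Bf z (a • w) = a * Bf z w := by
  simp only [Bf, Prod.smul_fst, Prod.smul_snd, smul_eq_mul, real_inner_smul_right]; ring

lemma Bf_add_left {d : ℕ} (z w u : ℝ × E d) : Bf (z + w) u = Bf z u + Bf w u := by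
  simp only [Bf, Prod.fst_add, Prod.snd_add, inner_add_left]; ring

lemma Bf_add_right {d : ℕ} (z w u : ℝ × E d) : Bf u (z + w) = Bf u z + Bf u w := by
  simp only [Bf, Prod.fst_add, Prod.snd_add, inner_add_right]; ring

lemma Bf_sub_left {d : ℕ} (z w u : ℝ × E d) : Bf (z - w) u = Bf z u - Bf w u := by
  simp only [Bf, Prod.fst_sub, Prod.snd_sub, inner_sub_left]; ring

lemma Bf_sub_right {d : ℕ} (z w u : ℝ × E d) : Bf u (z - w) = Bf u z - Bf u w := by
  simp only [Bf, Prod.fst_sub, Prod.snd_sub, inner_sub_right]; ring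

lemma tanh_half_eq {s : ℝ} (hs : s ≠ 0) :
    (Real.cosh s - 1) / Real.sinh s = Real.sinh (s / 2) / Real.cosh (s / 2) := by
  have hcosh : Real.cosh s = 2 * Real.cosh (s / 2) ^ 2 - 1 := by
    have h1 := Real.cosh_two_mul (s / 2)
    have h2 := Real.cosh_sq_sub_sinh_sq (s / 2)
    rw [show 2 * (s / 2) = s by ring] at h1
    linarith
  have hsinh : Real.sinh s = 2 * Real.sinh (s / 2) * Real.cosh (s / 2) := by
    have := Real.sinh_two_mul (s / 2)
    rw [show 2 * (s / 2) = s by ring] at this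
    linarith
  have hc2 : Real.cosh (s / 2) ^ 2 = Real.sinh (s / 2) ^ 2 + 1 := by
    have := Real.cosh_sq_sub_sinh_sq (s / 2); linarith
  have hcpos : 0 < Real.cosh (s / 2) := Real.cosh_pos (s / 2)
  have hsne : Real.sinh (s / 2) ≠ 0 := by
    simp only [ne_eq, Real.sinh_eq_zero]
    exact fun h => hs (by linarith)
  rw [hcosh, hsinh]
  field_simp
  nlinarith [hc2]

lemma sinh_coeff_nonneg {A0 B0 : ℝ}
    (h : ∀ s : ℝ, A0 ≤ A0 * Real.cosh s + B0 * Real.sinh s) : 0 ≤ B0 := by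
  have hbound : ∀ᶠ s in nhdsWithin (0:ℝ) (Set.Ioi 0),
      -B0 ≤ A0 * (Real.sinh (s / 2) / Real.cosh (s / 2)) := by
    filter_upwards [self_mem_nhdsWithin] with s hs
    have hs0 : (0:ℝ) < s := hs
    have hsinh : 0 < Real.sinh s := Real.sinh_pos_iff.2 hs0
    have h1 := h s
    have h2 : -B0 ≤ A0 * ((Real.cosh s - 1) / Real.sinh s) := by
      rw [show A0 * ((Real.cosh s - 1) / Real.sinh s)
          = A0 * (Real.cosh s - 1) / Real.sinh s by ring, le_div_iff₀ hsinh]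
      nlinarith [h1]
    rwa [tanh_half_eq (ne_of_gt hs0)] at h2
  have hlim : Filter.Tendsto (fun s : ℝ => A0 * (Real.sinh (s / 2) / Real.cosh (s / 2)))
      (nhdsWithin (0:ℝ) (Set.Ioi 0)) (nhds 0) := by
    have hc : Continuous fun s : ℝ => A0 * (Real.sinh (s / 2) / Real.cosh (s / 2)) :=
      continuous_const.mul ((Real.continuous_sinh.comp (continuous_id.div_const 2)).div
        (Real.continuous_cosh.comp (continuous_id.div_const 2))
        (fun x => ne_of_gt (Real.cosh_pos _)))
    have h0 : Filter.Tendsto (fun s : ℝ => A0 * (Real.sinh (s / 2) / Real.cosh (s / 2)))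
        (nhds 0) (nhds 0) := by
      have := hc.tendsto 0
      simpa using this
    exact h0.mono_left nhdsWithin_le_nhds
  have := ge_of_tendsto hlim hbound
  linarith

lemma sinh_coeff_zero {A0 B0 : ℝ}
    (h : ∀ s : ℝ, A0 ≤ A0 * Real.cosh s + B0 * Real.sinh s) : B0 = 0 := by
  have h1 : 0 ≤ B0 := sinh_coeff_nonneg h
  have h2 : 0 ≤ -B0 := by
    apply sinh_coeff_nonneg (A0 := A0)
    intro s
    have := h (-s)
    rw [Real.cosh_neg, Real.sinh_neg] at this
    linarith
  linarith

lemma Bf_nonpos_of_orth {d : ℕ} {p : E d} (hp : p ∈ pball d) {Z : ℝ × E d}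
    (hZ : Bf Z (Lf p) = 0) : Bf Z Z ≤ 0 := by
  set P := Lf p with hP
  have hPsq : P.1 ^ 2 = 1 + ‖P.2‖ ^ 2 := sq_fst_of_Bf_one (Bf_self_L hp)
  have h1 : Z.1 * P.1 = inner ℝ Z.2 P.2 := by
    have : Z.1 * P.1 - inner ℝ Z.2 P.2 = 0 := hZ
    linarith
  have hCS := real_inner_mul_inner_self_le Z.2 P.2
  have hZZ : Bf Z Z = Z.1 ^ 2 - ‖Z.2‖ ^ 2 := by
    simp only [Bf, real_inner_self_eq_norm_sq]; ring
  have hinZ : (inner ℝ Z.2 Z.2 : ℝ) = ‖Z.2‖ ^ 2 := real_inner_self_eq_norm_sq Z.2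
  have hinP : (inner ℝ P.2 P.2 : ℝ) = ‖P.2‖ ^ 2 := real_inner_self_eq_norm_sq P.2
  rw [hZZ]
  rw [hinZ, hinP] at hCS
  have hCS' : Z.1 ^ 2 * P.1 ^ 2 ≤ ‖Z.2‖ ^ 2 * ‖P.2‖ ^ 2 := by
    calc Z.1 ^ 2 * P.1 ^ 2 = (Z.1 * P.1) * (Z.1 * P.1) := by ring
      _ = (inner ℝ Z.2 P.2 : ℝ) * (inner ℝ Z.2 P.2 : ℝ) := by rw [h1]
      _ ≤ ‖Z.2‖ ^ 2 * ‖P.2‖ ^ 2 := hCS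
  have e1 : Z.1 ^ 2 * (1 + ‖P.2‖ ^ 2) ≤ ‖Z.2‖ ^ 2 * ‖P.2‖ ^ 2 := by
    rw [← hPsq]; exact hCS'
  have hn : (0:ℝ) < 1 + ‖P.2‖ ^ 2 := by positivity
  nlinarith [e1, hn, sq_nonneg ‖Z.2‖]

lemma discrim_le_of_quad_nonpos {a b c : ℝ} (h : ∀ r : ℝ, a * r ^ 2 + 2 * b * r + c ≤ 0) :
    b ^ 2 ≤ a * c := by
  have h' : ∀ r : ℝ, 0 ≤ (-a) * (r * r) + (-(2 * b)) * r + (-c) := by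
    intro r; have := h r; nlinarith
  have hd := discrim_le_zero h'
  rw [discrim] at hd
  nlinarith [hd]

/-- The key quadrilateral inequality:
`cosh d(x,y) ≥ cosh d(x,p) · cosh d(y,q) · cosh d(p,q) - sinh d(x,p) · sinh d(y,q)`,
in the weakened product form sufficient for the contraction estimate. -/
lemma key_ineq {d : ℕ} {M : Set (E d)} (hM : TotGeodesic M) {x y p q : E d}
    (hx : x ∈ pball d) (hy : y ∈ pball d) (hpM : p ∈ M) (hqM : q ∈ M)
    (hpx : ∀ m ∈ M, dH x p ≤ dH x m) (hqy : ∀ m ∈ M, dH y q ≤ dH y m) :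
    Qf x p * Qf y q * (Qf p q - 1) ≤ Qf x y - 1 := by
  have hp : p ∈ pball d := hM.1 hpM
  have hq : q ∈ pball d := hM.1 hqM
  by_cases hpq : p = q
  · subst hpq
    rw [Qf_self]
    have := one_le_Qf hx hy
    have h1 := one_le_Qf hx hp
    have h2 := one_le_Qf hy hp
    nlinarith
  obtain ⟨γ, V, hγ, hγ0, hγδ, hLγ, hBPV, hBVV⟩ := line_through hp hq hpq
  have hrange : Set.range γ ⊆ M :=
    hM.2 p hpM q hqM hpq _ ⟨γ, hγ, rfl⟩ ⟨0, hγ0⟩ ⟨_, hγδ⟩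
  set A := Qf x p with hA_def
  set H := Qf y q with hH_def
  set c := Qf p q with hc_def
  set δ := arcosh c with hδ_def
  have hc1 : 1 < c := Qf_gt_one hp hq hpq
  have hA1 : 1 ≤ A := one_le_Qf hx hp
  have hH1 : 1 ≤ H := one_le_Qf hy hq
  set s0 := Real.sinh δ with hs0_def
  have hcoshδ : Real.cosh δ = c := cosh_arcosh (le_of_lt hc1)
  have hpyth : c ^ 2 - s0 ^ 2 = 1 := by
    have := Real.cosh_sq_sub_sinh_sq δ
    rw [hcoshδ] at this; linarith
  -- minimality of distances along γ
  have hQmin : ∀ (z : E d), z ∈ pball d → (∀ m ∈ M, dH z m ≥ dH z (γ 0)) →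
      True := fun _ _ _ => trivial
  have hγball : ∀ t, γ t ∈ pball d := hγ.1
  have hminx : ∀ s : ℝ, A ≤ Qf x (γ s) := by
    intro s
    have h1 := hpx (γ s) (hrange ⟨s, rfl⟩)
    exact le_of_arcosh_le hA1 (one_le_Qf hx (hγball s)) h1
  have hminy : ∀ s : ℝ, H ≤ Qf y (γ s) := by
    intro s
    have h1 := hqy (γ s) (hrange ⟨s, rfl⟩)
    exact le_of_arcosh_le hH1 (one_le_Qf hy (hγball s)) h1
  -- expansion of Qf z (γ s)
  have hexp : ∀ (z : E d), z ∈ pball d → ∀ s : ℝ,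
      Qf z (γ s) = Real.cosh s * Bf (Lf z) (Lf p) + Real.sinh s * Bf (Lf z) V := by
    intro z hz s
    rw [Qf_eq_B hz (hγball s), hLγ s, Bf_add_right, Bf_smul_right, Bf_smul_right]
  set bx := Bf (Lf x) V with hbx_def
  set ay := Bf (Lf y) (Lf p) with hay_def
  set by' := Bf (Lf y) V with hby_def
  have hAx : Bf (Lf x) (Lf p) = A := (Qf_eq_B hx hp).symm
  have hbx0 : bx = 0 := by
    apply sinh_coeff_zero (A0 := A)
    intro s
    have := hminx s
    rw [hexp x hx s, hAx] at this
    linarith [this]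
  -- y-side : value at δ and stationarity at δ
  have he1 : ay * c + by' * s0 = H := by
    have h1 : Qf y (γ δ) = H := by rw [hγδ]
    rw [hexp y hy δ, hcoshδ, ← hs0_def, ← hay_def, ← hby_def] at h1
    linarith [h1]
  have he2 : ay * s0 + by' * c = 0 := by
    apply sinh_coeff_zero (A0 := H)
    intro r
    have h1 := hminy (δ + r)
    rw [hexp y hy (δ + r), Real.cosh_add, Real.sinh_add, hcoshδ, ← hs0_def,
      ← hay_def, ← hby_def] at h1
    calc H ≤ (c * Real.cosh r + s0 * Real.sinh r) * ay
          + (s0 * Real.cosh r + c * Real.sinh r) * by' := h1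
      _ = H * Real.cosh r + (ay * s0 + by' * c) * Real.sinh r := by
          linear_combination Real.cosh r * he1
  have hay_val : ay = c * H := by linear_combination c * he1 - s0 * he2 - ay * hpyth
  have hby_val : by' = -(s0 * H) := by linear_combination c * he2 - s0 * he1 - by' * hpyth
  -- orthogonal components
  set Xp := Lf x - A • Lf p with hXp_def
  set Yp := Lf y - (c * H) • Lf p - (s0 * H) • V with hYp_def
  have hBPP : Bf (Lf p) (Lf p) = 1 := Bf_self_L hp
  have hBVP : Bf V (Lf p) = 0 := by rw [Bf_comm]; exact hBPV
  have hayc : Bf (Lf y) (Lf p) = c * H := by rw [← hay_def, hay_val]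
  have hbyc : Bf (Lf y) V = -(s0 * H) := by rw [← hby_def, hby_val]
  have hbxc : Bf (Lf x) V = 0 := by rw [← hbx_def, hbx0]
  have hXpP : Bf Xp (Lf p) = 0 := by
    rw [hXp_def, Bf_sub_left, Bf_smul_left, hAx, hBPP]; ring
  have hYpP : Bf Yp (Lf p) = 0 := by
    rw [hYp_def, Bf_sub_left, Bf_sub_left, Bf_smul_left, Bf_smul_left, hayc, hBPP, hBVP]
    ring
  have hXpXp : Bf Xp Xp = 1 - A ^ 2 := by
    rw [hXp_def]
    simp only [Bf_sub_left, Bf_sub_right, Bf_smul_left, Bf_smul_right]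
    rw [Bf_self_L hx, hAx, hBPP, Bf_comm (Lf p) (Lf x), hAx]
    ring
  have hYpYp : Bf Yp Yp = 1 - H ^ 2 := by
    rw [hYp_def]
    simp only [Bf_sub_left, Bf_sub_right, Bf_smul_left, Bf_smul_right]
    rw [Bf_self_L hy, hayc, hbyc, hBPP, hBVV, hBPV, hBVP,
      Bf_comm (Lf p) (Lf y), hayc, Bf_comm V (Lf y), hbyc]
    nlinarith [hpyth]
  have hXpYp : Bf Xp Yp = Qf x y - A * c * H := by
    rw [hXp_def, hYp_def]
    simp only [Bf_sub_left, Bf_sub_right, Bf_smul_left, Bf_smul_right]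
    rw [← Qf_eq_B hx hy, hAx, hbxc, hBPP, hBPV, Bf_comm (Lf p) (Lf y), hayc]
    ring
  -- Cauchy-Schwarz on the negative-definite complement of P
  have hquad : ∀ r : ℝ, Bf Yp Yp * r ^ 2 + 2 * Bf Xp Yp * r + Bf Xp Xp ≤ 0 := by
    intro r
    have horth : Bf (Xp + r • Yp) (Lf p) = 0 := by
      rw [Bf_add_left, Bf_smul_left, hXpP, hYpP]; ring
    have hnp := Bf_nonpos_of_orth hp horth
    have hexpand : Bf (Xp + r • Yp) (Xp + r • Yp)
        = Bf Yp Yp * r ^ 2 + 2 * Bf Xp Yp * r + Bf Xp Xp := by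
      rw [Bf_add_left, Bf_add_right, Bf_add_right, Bf_smul_left, Bf_smul_right,
        Bf_smul_left, Bf_smul_right, Bf_comm Yp Xp]
      ring
    linarith [hexpand ▸ hnp]
  have hdisc : (Bf Xp Yp) ^ 2 ≤ Bf Yp Yp * Bf Xp Xp := discrim_le_of_quad_nonpos hquad
  rw [hXpXp, hYpYp, hXpYp] at hdisc
  -- conclude
  have hAH : 0 ≤ A * H - 1 := by nlinarith [hA1, hH1]
  have hstep : (A ^ 2 - 1) * (H ^ 2 - 1) ≤ (A * H - 1) ^ 2 := by
    nlinarith [sq_nonneg (A - H)]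
  have h2 : (Qf x y - A * c * H) ^ 2 ≤ (A * H - 1) ^ 2 := by nlinarith [hdisc]
  nlinarith [h2, hAH]
lemma tendsto_Qf {d : ℕ} {α : Type*} {l : Filter α} {f g : α → E d} {a b : E d}
    (ha : a ∈ pball d) (hb : b ∈ pball d)
    (hf : Filter.Tendsto f l (nhds a)) (hg : Filter.Tendsto g l (nhds b)) :
    Filter.Tendsto (fun t => Qf (f t) (g t)) l (nhds (Qf a b)) := by
  have h1 : Filter.Tendsto (fun t => 2 * ‖f t - g t‖ ^ 2) l (nhds (2 * ‖a - b‖ ^ 2)) :=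
    tendsto_const_nhds.mul (((continuous_norm.tendsto _).comp (hf.sub hg)).pow 2)
  have h2 : Filter.Tendsto (fun t => (1 - ‖f t‖ ^ 2) * (1 - ‖g t‖ ^ 2)) l
      (nhds ((1 - ‖a‖ ^ 2) * (1 - ‖b‖ ^ 2))) :=
    (tendsto_const_nhds.sub (((continuous_norm.tendsto _).comp hf).pow 2)).mul
      (tendsto_const_nhds.sub (((continuous_norm.tendsto _).comp hg).pow 2))
  have hne : (1 - ‖a‖ ^ 2) * (1 - ‖b‖ ^ 2) ≠ 0 :=
    ne_of_gt (mul_pos (ball_pos ha) (ball_pos hb))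
  simpa only [Qf, Pi.div_apply] using (tendsto_const_nhds : Filter.Tendsto (fun _ => (1:ℝ)) l (nhds 1)).add (h1.div h2 hne)

end Helpers

/-- Under the geodesic projection `π^G_M` onto a totally geodesic
submanifold `M ⊆ ℍ^d`, every tangent vector `v` at `x` gets at least
`cosh(d_ℍ(x,M))` times shorter: `‖dπ^G_M(v)‖_ℍ ≤ ‖v‖_ℍ / cosh(d_ℍ(x,M))`, where the
hyperbolic norm of a tangent vector `w` at a point `y` is `2‖w‖/(1 - ‖y‖²)` and
`d_ℍ(x,M) = inf_{m ∈ M} d_ℍ(x,m)`. -/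
theorem geodesic_proj_infinitesimal_shrink
    {d : ℕ} (M : Set (E d)) (hM : TotGeodesic M)
    (π : E d → E d) (hπ : IsGeodProj M π)
    (x : E d) (hx : x ∈ pball d) (hdiff : DifferentiableAt ℝ π x) (v : E d) :
    2 * ‖fderiv ℝ π x v‖ / (1 - ‖π x‖ ^ 2) ≤
      (2 * ‖v‖ / (1 - ‖x‖ ^ 2)) / Real.cosh (sInf (dH x '' M)) := by
  classical
  -- Setup
  have hnear := hπ x hx
  have hpM : π x ∈ M := hnear.1
  have hminx : ∀ m ∈ M, dH x (π x) ≤ dH x m := hnear.2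
  have hp : π x ∈ pball d := hM.1 hpM
  have hxpos := ball_pos hx
  have hppos := ball_pos hp
  have hA1 : 1 ≤ Qf x (π x) := one_le_Qf hx hp
  -- the infimum of the distances to M is attained at π x
  have hsinf : sInf (dH x '' M) = dH x (π x) := by
    apply IsLeast.csInf_eq
    exact ⟨⟨π x, hpM, rfl⟩, by rintro r ⟨m, hm, rfl⟩; exact hminx m hm⟩
  have hcosh : Real.cosh (sInf (dH x '' M)) = Qf x (π x) := by
    rw [hsinf, dH_eq, cosh_arcosh hA1]
  rw [hcosh, le_div_iff₀ (lt_of_lt_of_le one_pos hA1)]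
  -- notation
  set p := π x with hp_def
  set A := Qf x p with hA_def
  set w := fderiv ℝ π x v with hw_def
  -- the curve t ↦ x + t v and its projection
  set y : ℝ → E d := fun t => x + t • v with hy_def
  set q : ℝ → E d := fun t => π (y t) with hq_def
  have hy0 : y 0 = x := by simp [hy_def]
  have hq0 : q 0 = p := by show π (y 0) = p; rw [hy0]
  have hycont : Filter.Tendsto y (nhds 0) (nhds x) := by
    have hc : Continuous y := continuous_const.add (continuous_id.smul continuous_const)
    simpa [hy0] using hc.tendsto 0
  -- derivative of the projected curve
  have hyd : HasDerivAt y v 0 := by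
    have h1 : HasDerivAt (fun t : ℝ => t • v) ((1:ℝ) • v) 0 := (hasDerivAt_id 0).smul_const v
    have h2 := h1.const_add x
    simpa [hy_def] using h2
  have hqd : HasDerivAt q w 0 := by
    have h2 : HasFDerivAt π (fderiv ℝ π x) (y 0) := by rw [hy0]; exact hdiff.hasFDerivAt
    exact h2.comp_hasDerivAt 0 hyd
  have hqcont : Filter.Tendsto q (nhds 0) (nhds p) := by
    have := hqd.continuousAt.tendsto
    rwa [hq0] at this
  -- positive-side filter
  set l := nhdsWithin (0:ℝ) (Set.Ioi 0) with hl_def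
  have hl_le : l ≤ nhds 0 := nhdsWithin_le_nhds
  have hl_ne : l ≤ nhdsWithin (0:ℝ) {0}ᶜ :=
    nhdsWithin_mono 0 (fun t ht => ne_of_gt ht)
  -- slope tendsto
  have hslope : Filter.Tendsto (fun t : ℝ => t⁻¹ • (q t - p)) l (nhds w) := by
    have h1 := hasDerivAt_iff_tendsto_slope.1 hqd
    have h2 : (slope q 0) = fun t : ℝ => t⁻¹ • (q t - p) := by
      funext t; rw [slope_def_module, hq0, sub_zero]
    rw [h2] at h1
    exact h1.mono_left hl_ne
  -- eventually y t is in the ball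
  have hyball : ∀ᶠ t in l, y t ∈ pball d := by
    have h1 : Filter.Tendsto (fun t => ‖y t‖) (nhds 0) (nhds ‖x‖) :=
      (continuous_norm.tendsto x).comp hycont
    have h2 : ∀ᶠ t in nhds (0:ℝ), ‖y t‖ < 1 := h1.eventually_lt_const hx
    exact h2.filter_mono hl_le
  -- the key inequality, eventually
  have hkey : ∀ᶠ t in l, A * Qf (y t) (q t) * ((Qf p (q t) - 1) / t ^ 2)
      ≤ (Qf x (y t) - 1) / t ^ 2 := by
    filter_upwards [hyball, self_mem_nhdsWithin] with t hyt ht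
    have ht0 : (0:ℝ) < t := ht
    have ht2 : (0:ℝ) < t ^ 2 := by positivity
    have hq' := hπ (y t) hyt
    have hki := key_ineq hM hx hyt hpM hq'.1 hminx hq'.2
    have hki2 := mul_le_mul_of_nonneg_right hki (le_of_lt (inv_pos.2 ht2))
    calc A * Qf (y t) (q t) * ((Qf p (q t) - 1) / t ^ 2)
        = Qf x p * Qf (y t) (q t) * (Qf p (q t) - 1) * (t ^ 2)⁻¹ := by
          rw [← hA_def]; ring
      _ ≤ (Qf x (y t) - 1) * (t ^ 2)⁻¹ := hki2
      _ = (Qf x (y t) - 1) / t ^ 2 := by ring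
  -- limits of both sides
  have hQyq : Filter.Tendsto (fun t => Qf (y t) (q t)) l (nhds A) :=
    tendsto_Qf hx hp (hycont.mono_left hl_le) (hqcont.mono_left hl_le)
  have hnormq : Filter.Tendsto (fun t => ‖q t‖) l (nhds ‖p‖) :=
    ((continuous_norm.tendsto p).comp hqcont).mono_left hl_le
  have hnormy : Filter.Tendsto (fun t => ‖y t‖) l (nhds ‖x‖) :=
    ((continuous_norm.tendsto x).comp hycont).mono_left hl_le
  have hqball : ∀ᶠ t in l, q t ∈ pball d := by
    filter_upwards [hyball] with t hyt
    exact hM.1 (hπ (y t) hyt).1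
  have hGlim : Filter.Tendsto (fun t => (Qf p (q t) - 1) / t ^ 2) l
      (nhds (2 * ‖w‖ ^ 2 / ((1 - ‖p‖ ^ 2) * (1 - ‖p‖ ^ 2)))) := by
    have heq : ∀ᶠ t in l, 2 * ‖t⁻¹ • (q t - p)‖ ^ 2 / ((1 - ‖p‖ ^ 2) * (1 - ‖q t‖ ^ 2))
        = (Qf p (q t) - 1) / t ^ 2 := by
      filter_upwards [self_mem_nhdsWithin, hqball] with t ht hqt
      have ht0 : t ≠ 0 := ne_of_gt ht
      have d1 : (1 - ‖p‖ ^ 2) ≠ 0 := ne_of_gt hppos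
      have d2 : (1 - ‖q t‖ ^ 2) ≠ 0 := ne_of_gt (ball_pos hqt)
      simp only [Qf, add_sub_cancel_left]
      rw [norm_smul, norm_sub_rev p (q t), Real.norm_eq_abs, mul_pow, sq_abs]
      field_simp
    have h1 : Filter.Tendsto (fun t => 2 * ‖t⁻¹ • (q t - p)‖ ^ 2) l (nhds (2 * ‖w‖ ^ 2)) :=
      tendsto_const_nhds.mul (((continuous_norm.tendsto w).comp hslope).pow 2)
    have h2 : Filter.Tendsto (fun t => (1 - ‖p‖ ^ 2) * (1 - ‖q t‖ ^ 2)) l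
        (nhds ((1 - ‖p‖ ^ 2) * (1 - ‖p‖ ^ 2))) :=
      tendsto_const_nhds.mul (tendsto_const_nhds.sub (hnormq.pow 2))
    have hne : (1 - ‖p‖ ^ 2) * (1 - ‖p‖ ^ 2) ≠ 0 := ne_of_gt (mul_pos hppos hppos)
    exact Filter.Tendsto.congr' heq (h1.div h2 hne)
  have hFlim : Filter.Tendsto (fun t => (Qf x (y t) - 1) / t ^ 2) l
      (nhds (2 * ‖v‖ ^ 2 / ((1 - ‖x‖ ^ 2) * (1 - ‖x‖ ^ 2)))) := by
    have heq : ∀ᶠ t in l, 2 * ‖v‖ ^ 2 / ((1 - ‖x‖ ^ 2) * (1 - ‖y t‖ ^ 2))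
        = (Qf x (y t) - 1) / t ^ 2 := by
      filter_upwards [self_mem_nhdsWithin, hyball] with t ht hyt
      have ht0 : t ≠ 0 := ne_of_gt ht
      have hxy : x - y t = -(t • v) := by simp [hy_def]
      have d1 : (1 - ‖x‖ ^ 2) ≠ 0 := ne_of_gt hxpos
      have d2 : (1 - ‖y t‖ ^ 2) ≠ 0 := ne_of_gt (ball_pos hyt)
      simp only [Qf, add_sub_cancel_left]
      rw [hxy, norm_neg, norm_smul, Real.norm_eq_abs, mul_pow, sq_abs]
      field_simp
      try ring_nf
      try tauto
    have h1 : Filter.Tendsto (fun t : ℝ => 2 * ‖v‖ ^ 2) l (nhds (2 * ‖v‖ ^ 2)) :=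
      tendsto_const_nhds
    have h2 : Filter.Tendsto (fun t => (1 - ‖x‖ ^ 2) * (1 - ‖y t‖ ^ 2)) l
        (nhds ((1 - ‖x‖ ^ 2) * (1 - ‖x‖ ^ 2))) :=
      tendsto_const_nhds.mul (tendsto_const_nhds.sub (hnormy.pow 2))
    have hne : (1 - ‖x‖ ^ 2) * (1 - ‖x‖ ^ 2) ≠ 0 := ne_of_gt (mul_pos hxpos hxpos)
    exact Filter.Tendsto.congr' heq (h1.div h2 hne)
  -- pass to the limit
  have hlhs : Filter.Tendsto (fun t => A * Qf (y t) (q t) * ((Qf p (q t) - 1) / t ^ 2)) l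
      (nhds (A * A * (2 * ‖w‖ ^ 2 / ((1 - ‖p‖ ^ 2) * (1 - ‖p‖ ^ 2))))) :=
    (tendsto_const_nhds.mul hQyq).mul hGlim
  have hle : A * A * (2 * ‖w‖ ^ 2 / ((1 - ‖p‖ ^ 2) * (1 - ‖p‖ ^ 2)))
      ≤ 2 * ‖v‖ ^ 2 / ((1 - ‖x‖ ^ 2) * (1 - ‖x‖ ^ 2)) :=
    le_of_tendsto_of_tendsto hlhs hFlim hkey
  -- conclude by taking square roots
  have hLnn : 0 ≤ 2 * ‖w‖ / (1 - ‖p‖ ^ 2) * A :=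
    mul_nonneg (div_nonneg (by positivity) hppos.le) (by linarith)
  have hRnn : 0 ≤ 2 * ‖v‖ / (1 - ‖x‖ ^ 2) := div_nonneg (by positivity) hxpos.le
  have hsq : (2 * ‖w‖ / (1 - ‖p‖ ^ 2) * A) ^ 2 ≤ (2 * ‖v‖ / (1 - ‖x‖ ^ 2)) ^ 2 := by
    have e1 : (2 * ‖w‖ / (1 - ‖p‖ ^ 2) * A) ^ 2
        = 2 * (A * A * (2 * ‖w‖ ^ 2 / ((1 - ‖p‖ ^ 2) * (1 - ‖p‖ ^ 2)))) := by
      field_simp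
    have e2 : (2 * ‖v‖ / (1 - ‖x‖ ^ 2)) ^ 2
        = 2 * (2 * ‖v‖ ^ 2 / ((1 - ‖x‖ ^ 2) * (1 - ‖x‖ ^ 2))) := by
      field_simp
    rw [e1, e2]
    linarith [hle]
  nlinarith [hsq, hLnn, hRnn]
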